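/- Let H, H' be finite-dimensional Hilbert spaces, let Λ be an operator on H with 0 ≤ Λ ≤ I, and let V : H → H' be a co-isometry (V V† = I) such that Π := V Λ V† is a projection. Then the range I of V† is invariant under Λ, i.e., Λ maps I into I. -/

import Mathlib

open Matrix ComplexOrder

open scoped MatrixOrder in
private lemma aux_psd_cancel {k l : ℕ} {M : Matrix (Fin k) (Fin k) ℂ} (hM : M.PosSemidef)
    (N : Matrix (Fin k) (Fin l) ℂ) (h : Nᴴ * M * N = 0) : M * N = 0 := by
  have hs := (CFC.sqrt_nonneg M).posSemidef
  have h1 : (CFC.sqrt M * N)ᴴ * (CFC.sqrt M * N) = 0 := by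
    rw [conjTranspose_mul, hs.1.eq]
    calc Nᴴ * CFC.sqrt M * (CFC.sqrt M * N) = Nᴴ * (CFC.sqrt M * CFC.sqrt M) * N := by
          simp only [Matrix.mul_assoc]
      _ = Nᴴ * M * N := by rw [CFC.sqrt_mul_sqrt_self M hM.nonneg]
      _ = 0 := h
  have h2 : CFC.sqrt M * N = 0 := conjTranspose_mul_self_eq_zero.mp h1
  calc M * N = CFC.sqrt M * (CFC.sqrt M * N) := by rw [← Matrix.mul_assoc, CFC.sqrt_mul_sqrt_self M hM.nonneg]
    _ = 0 := by rw [h2, Matrix.mul_zero]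

/-- If `0 ≤ Λ ≤ I`, `V` is a co-isometry (`V * Vᴴ = 1`) and
`Π := V * Λ * Vᴴ` is an (orthogonal) projection, then the range of `Vᴴ` is
invariant under `Λ`. -/
theorem range_adjoint_coisometry_invariant
    {n m : ℕ} (Λ : Matrix (Fin n) (Fin n) ℂ) (V : Matrix (Fin m) (Fin n) ℂ)
    (hΛ : Λ.PosSemidef) (hΛ' : (1 - Λ).PosSemidef)
    (hV : V * Vᴴ = 1)
    (hproj : (V * Λ * Vᴴ) * (V * Λ * Vᴴ) = V * Λ * Vᴴ)
    (hherm : (V * Λ * Vᴴ)ᴴ = V * Λ * Vᴴ) :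
    ∀ ψ : Fin m → ℂ, ∃ φ : Fin m → ℂ, Λ *ᵥ (Vᴴ *ᵥ ψ) = Vᴴ *ᵥ φ := by
  set Pr := V * Λ * Vᴴ with hPr
  set A : Matrix (Fin n) (Fin m) ℂ := Vᴴ * Pr with hA
  -- (1 - Λ) * A = 0
  have key1 : (1 - Λ) * A = 0 := by
    apply aux_psd_cancel hΛ'
    have hAH : Aᴴ = Pr * V := by
      rw [hA, conjTranspose_mul, conjTranspose_conjTranspose, hherm]
    rw [hAH, hA]
    have : Pr * V * (1 - Λ) * (Vᴴ * Pr) = Pr * (V * Vᴴ) * Pr - (Pr * (V * Λ * Vᴴ)) * Pr := by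
      simp only [Matrix.mul_sub, Matrix.sub_mul, Matrix.mul_one, Matrix.mul_assoc, hPr]
    rw [this, hV, ← hPr, hproj, Matrix.mul_one, hproj, sub_self]
  -- Λ * (Vᴴ - A) = 0
  have key2 : Λ * (Vᴴ - A) = 0 := by
    apply aux_psd_cancel hΛ
    have hBH : (Vᴴ - A)ᴴ = V - Pr * V := by
      rw [conjTranspose_sub, conjTranspose_conjTranspose, hA, conjTranspose_mul,
        conjTranspose_conjTranspose, hherm]
    rw [hBH]
    have : (V - Pr * V) * Λ * (Vᴴ - Vᴴ * Pr) =
        (V * Λ * Vᴴ) - (V * Λ * Vᴴ) * Pr - Pr * (V * Λ * Vᴴ) + Pr * ((V * Λ * Vᴴ) * Pr) := by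
      simp only [Matrix.mul_sub, Matrix.sub_mul, Matrix.mul_assoc]
      abel
    rw [this, ← hPr, hproj, hproj, sub_self, zero_sub, neg_add_cancel]
  have hLA : Λ * A = A := by
    have := key1
    rw [Matrix.sub_mul, Matrix.one_mul, sub_eq_zero] at this
    exact this.symm
  have hmain : Λ * Vᴴ = A := by
    have h0 : Λ * Vᴴ - Λ * A = 0 := by rw [← Matrix.mul_sub]; exact key2
    rw [hLA, sub_eq_zero] at h0
    exact h0
  intro ψ
  refine ⟨Pr *ᵥ ψ, ?_⟩
  have hM : Λ * Vᴴ = Vᴴ * Pr := by rw [hmain, hA]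
  rw [mulVec_mulVec, mulVec_mulVec, hM]
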